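/- Let F_2 be the free group on x_1, x_2. In the reduced free group RF_2 (quotient of F_2 by all relations [x_i, w^{-1} x_i w] = 1), the image of the commutator [x_1, x_2] is central, and RF_2 is nilpotent of class exactly 2 (i.e., [x_1,x_2] ≠ 1 in RF_2 but all triple commutators vanish). -/

import Mathlib

/-- The set of relators `[x_i, w⁻¹ x_i w]` (with `[a,b] = a⁻¹b⁻¹ab`) in the free group. -/
def redRelators (n : ℕ) : Set (FreeGroup (Fin n)) :=
  {r | ∃ (i : Fin n) (w : FreeGroup (Fin n)),
    r = (FreeGroup.of i)⁻¹ * (w⁻¹ * FreeGroup.of i * w)⁻¹ *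
        FreeGroup.of i * (w⁻¹ * FreeGroup.of i * w)}

/-- The reduced free group `RF_n`. -/
def RF (n : ℕ) := FreeGroup (Fin n) ⧸ Subgroup.normalClosure (redRelators n)

instance (n : ℕ) : Group (RF n) := by unfold RF; infer_instance

open scoped commutatorElement

/-! ### The discrete Heisenberg group, used to show `[x₁,x₂] ≠ 1` in `RF 2`. -/

structure Heis where
  x : ℤ
  y : ℤ
  z : ℤ

namespace Heis

instance : Mul Heis := ⟨fun p q => ⟨p.x + q.x, p.y + q.y, p.z + q.z + p.x * q.y⟩⟩
instance : One Heis := ⟨⟨0, 0, 0⟩⟩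
instance : Inv Heis := ⟨fun p => ⟨-p.x, -p.y, -p.z + p.x * p.y⟩⟩

@[simp] lemma mul_x (p q : Heis) : (p * q).x = p.x + q.x := rfl
@[simp] lemma mul_y (p q : Heis) : (p * q).y = p.y + q.y := rfl
@[simp] lemma mul_z (p q : Heis) : (p * q).z = p.z + q.z + p.x * q.y := rfl
@[simp] lemma inv_x (p : Heis) : p⁻¹.x = -p.x := rfl
@[simp] lemma inv_y (p : Heis) : p⁻¹.y = -p.y := rfl
@[simp] lemma inv_z (p : Heis) : p⁻¹.z = -p.z + p.x * p.y := rfl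
@[simp] lemma one_x : (1 : Heis).x = 0 := rfl
@[simp] lemma one_y : (1 : Heis).y = 0 := rfl
@[simp] lemma one_z : (1 : Heis).z = 0 := rfl

lemma ext' {p q : Heis} (h1 : p.x = q.x) (h2 : p.y = q.y) (h3 : p.z = q.z) : p = q := by
  cases p; cases q; simp_all

instance : Group Heis where
  mul_assoc p q r := by apply ext' <;> (simp; try ring)
  one_mul p := by apply ext' <;> simp
  mul_one p := by apply ext' <;> simp
  inv_mul_cancel p := by apply ext' <;> (simp; try ring)

/-- In the Heisenberg group, every element commutes with all of its conjugates. -/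
lemma commute_conj (a g : Heis) : Commute a (g⁻¹ * a * g) := by
  unfold Commute SemiconjBy
  apply ext' <;> (simp; try ring)

end Heis

/-- In a subgroup closure of a set of pairwise commuting elements, all elements commute. -/
lemma closure_comm {G : Type*} [Group G] {S : Set G}
    (h : ∀ s ∈ S, ∀ t ∈ S, Commute s t) {u v : G}
    (hu : u ∈ Subgroup.closure S) (hv : v ∈ Subgroup.closure S) : Commute u v := by
  induction hu, hv using Subgroup.closure_induction₂ with
  | mem a b ha hb => exact h a ha b hb
  | one_left x hx => exact Commute.one_left x
  | one_right x hx => exact Commute.one_right x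
  | mul_left a b c _ _ _ h1 h2 => exact h1.mul_left h2
  | mul_right a b c _ _ _ h1 h2 => exact h1.mul_right h2
  | inv_left a b _ _ h1 => exact h1.inv_left
  | inv_right a b _ _ h1 => exact h1.inv_right

/-- From `x⁻¹ * y⁻¹ * x * y = 1` deduce that `x` and `y` commute. -/
lemma commute_of_rel {G : Type*} [Group G] {x y : G} (h : x⁻¹ * y⁻¹ * x * y = 1) :
    Commute x y := by
  have h2 : ⁅x⁻¹, y⁻¹⁆ = 1 := by
    rw [commutatorElement_def, inv_inv, inv_inv]; exact h
  have h3 := commutatorElement_eq_one_iff_commute.mp h2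
  simpa using h3.inv_left.inv_right

/-- From `Commute x y` deduce `x⁻¹ * y⁻¹ * x * y = 1`. -/
lemma rel_of_commute {G : Type*} [Group G] {x y : G} (h : Commute x y) :
    x⁻¹ * y⁻¹ * x * y = 1 := by
  rw [mul_assoc, mul_assoc, h.eq]
  simp

namespace RFtwo

abbrev π : FreeGroup (Fin 2) →* RF 2 := QuotientGroup.mk' (Subgroup.normalClosure (redRelators 2))

noncomputable abbrev a : RF 2 := π (FreeGroup.of 0)
noncomputable abbrev b : RF 2 := π (FreeGroup.of 1)
noncomputable abbrev c : RF 2 := a⁻¹ * b⁻¹ * a * b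

/-- The key relation in `RF 2`: each generator commutes with all of its conjugates. -/
lemma key (i : Fin 2) (w : FreeGroup (Fin 2)) :
    Commute (π (FreeGroup.of i)) ((π w)⁻¹ * π (FreeGroup.of i) * π w) := by
  have hr : ((FreeGroup.of i)⁻¹ * (w⁻¹ * FreeGroup.of i * w)⁻¹ *
      FreeGroup.of i * (w⁻¹ * FreeGroup.of i * w)) ∈
      Subgroup.normalClosure (redRelators 2) :=
    Subgroup.subset_normalClosure ⟨i, w, rfl⟩
  have h1 : π ((FreeGroup.of i)⁻¹ * (w⁻¹ * FreeGroup.of i * w)⁻¹ *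
      FreeGroup.of i * (w⁻¹ * FreeGroup.of i * w)) = 1 := by
    exact (QuotientGroup.eq_one_iff _).mpr hr
  simp only [map_mul, map_inv] at h1
  exact commute_of_rel h1

lemma hac : Commute a c := by
  have h1 : Commute a (b⁻¹ * a * b) := key 0 (FreeGroup.of 1)
  have hc : c = a⁻¹ * (b⁻¹ * a * b) := by
    show a⁻¹ * b⁻¹ * a * b = _
    simp only [mul_assoc]
  rw [hc]
  exact ((Commute.refl a).inv_right).mul_right h1

lemma hbc : Commute b c := by
  have h2 : Commute b (a⁻¹ * b * a) := key 1 (FreeGroup.of 0)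
  have hc : c = (a⁻¹ * b * a)⁻¹ * b := by
    show a⁻¹ * b⁻¹ * a * b = _
    simp only [mul_inv_rev, inv_inv, mul_assoc]
  rw [hc]
  exact (h2.inv_right).mul_right (Commute.refl b)

lemma hgen : Subgroup.closure ({a, b} : Set (RF 2)) = ⊤ := by
  have hsurj : Function.Surjective π := QuotientGroup.mk'_surjective _
  have h2 : Subgroup.map π ⊤ = ⊤ := Subgroup.map_top_of_surjective _ hsurj
  rw [← FreeGroup.closure_range_of (Fin 2), MonoidHom.map_closure] at h2
  have himg : π '' Set.range (FreeGroup.of : Fin 2 → FreeGroup (Fin 2)) = {a, b} := by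
    ext g
    constructor
    · rintro ⟨-, ⟨i, rfl⟩, rfl⟩
      fin_cases i
      · exact Or.inl rfl
      · exact Or.inr rfl
    · rintro (rfl | rfl)
      · exact ⟨FreeGroup.of 0, ⟨0, rfl⟩, rfl⟩
      · exact ⟨FreeGroup.of 1, ⟨1, rfl⟩, rfl⟩
  rwa [himg] at h2

lemma hc_center : c ∈ Subgroup.center (RF 2) := by
  rw [Subgroup.mem_center_iff]
  intro g
  have hg : g ∈ Subgroup.closure ({a, b} : Set (RF 2)) := hgen ▸ Subgroup.mem_top g
  induction hg using Subgroup.closure_induction with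
  | mem x hx =>
    rcases hx with rfl | rfl
    · exact hac.eq
    · exact hbc.eq
  | one => simp
  | mul x y _ _ h1 h2 => rw [mul_assoc, h2, ← mul_assoc, h1, mul_assoc]
  | inv x _ h1 =>
    have hx : Commute x c := h1
    exact hx.inv_left.eq

/-- The homomorphism to the Heisenberg group. -/
noncomputable def φ : FreeGroup (Fin 2) →* Heis :=
  FreeGroup.lift (fun i => if i = 0 then ⟨1, 0, 0⟩ else ⟨0, 1, 0⟩)

lemma hker : redRelators 2 ⊆ (φ.ker : Set (FreeGroup (Fin 2))) := by
  rintro r ⟨i, w, rfl⟩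
  have := rel_of_commute (Heis.commute_conj (φ (FreeGroup.of i)) (φ w))
  simpa [MonoidHom.mem_ker, map_mul, map_inv] using this

/-- The induced homomorphism `RF 2 →* Heis`. -/
noncomputable def ψ : RF 2 →* Heis :=
  QuotientGroup.lift _ φ (Subgroup.normalClosure_le_normal hker)

lemma c_eq : c = π ((FreeGroup.of 0)⁻¹ * (FreeGroup.of 1)⁻¹ *
    FreeGroup.of 0 * FreeGroup.of 1) := by
  simp only [map_mul, map_inv]

lemma hc_ne_one : c ≠ 1 := by
  rw [c_eq]
  intro h
  have h1 : ψ (π ((FreeGroup.of 0)⁻¹ * (FreeGroup.of 1)⁻¹ *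
      FreeGroup.of 0 * FreeGroup.of 1)) = 1 := by rw [h, map_one]
  have h2 : ψ (π ((FreeGroup.of 0)⁻¹ * (FreeGroup.of 1)⁻¹ *
      FreeGroup.of 0 * FreeGroup.of 1)) = φ ((FreeGroup.of 0)⁻¹ * (FreeGroup.of 1)⁻¹ *
      FreeGroup.of 0 * FreeGroup.of 1) := QuotientGroup.lift_mk' _ _ _
  have h3 : (φ ((FreeGroup.of 0)⁻¹ * (FreeGroup.of 1)⁻¹ *
      FreeGroup.of 0 * FreeGroup.of 1)).z = 0 := by
    rw [← h2, h1, Heis.one_z]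
  simp [φ, map_mul, map_inv, FreeGroup.lift_apply_of] at h3

lemma comm_in_center (g h : RF 2) : ⁅g, h⁆ ∈ Subgroup.center (RF 2) := by
  set Z := Subgroup.center (RF 2) with hZ
  let ρ : RF 2 →* RF 2 ⧸ Z := QuotientGroup.mk' Z
  have hzc : ρ c = 1 := by
    rw [← MonoidHom.mem_ker, QuotientGroup.ker_mk']
    exact hc_center
  have hab : Commute (ρ a) (ρ b) := by
    apply commute_of_rel
    simpa only [map_mul, map_inv] using hzc
  have hgenQ : Subgroup.closure ({ρ a, ρ b} : Set (RF 2 ⧸ Z)) = ⊤ := by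
    have h2 : Subgroup.map ρ ⊤ = ⊤ :=
      Subgroup.map_top_of_surjective _ (QuotientGroup.mk'_surjective Z)
    rw [← hgen, MonoidHom.map_closure, Set.image_insert_eq, Set.image_singleton] at h2
    exact h2
  have hcommQ : ∀ u v : RF 2 ⧸ Z, Commute u v := by
    intro u v
    refine closure_comm ?_ (hgenQ ▸ Subgroup.mem_top u) (hgenQ ▸ Subgroup.mem_top v)
    rintro s (rfl | rfl) t (rfl | rfl)
    · exact Commute.refl _
    · exact hab
    · exact hab.symm
    · exact Commute.refl _
  rw [← QuotientGroup.ker_mk' Z, MonoidHom.mem_ker, map_commutatorElement]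
  exact commutatorElement_eq_one_iff_commute.mpr (hcommQ _ _)

lemma lcs_two : (⊤ : Subgroup (RF 2)).lowerCentralSeries 2 = ⊥ := by
  have h1 : (⊤ : Subgroup (RF 2)).lowerCentralSeries 1 ≤ Subgroup.center (RF 2) := by
    have : (⊤ : Subgroup (RF 2)).lowerCentralSeries 1 = ⁅(⊤ : Subgroup (RF 2)), ⊤⁆ := rfl
    rw [this]
    exact Subgroup.commutator_le.mpr fun g _ h _ => comm_in_center g h
  have h2 : (⊤ : Subgroup (RF 2)).lowerCentralSeries 2 = ⁅(⊤ : Subgroup (RF 2)).lowerCentralSeries 1, (⊤ : Subgroup (RF 2))⁆ :=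
    rfl
  rw [eq_bot_iff, h2]
  refine Subgroup.commutator_le.mpr fun g hg h _ => ?_
  rw [Subgroup.mem_bot]
  have hgz := h1 hg
  rw [Subgroup.mem_center_iff] at hgz
  exact commutatorElement_eq_one_iff_commute.mpr (hgz h).symm

end RFtwo

theorem RF_two_class_two :
    ((QuotientGroup.mk ((FreeGroup.of (0 : Fin 2))⁻¹ * (FreeGroup.of (1 : Fin 2))⁻¹ *
        FreeGroup.of (0 : Fin 2) * FreeGroup.of (1 : Fin 2)) : RF 2) ∈
      Subgroup.center (RF 2)) ∧
    ((QuotientGroup.mk ((FreeGroup.of (0 : Fin 2))⁻¹ * (FreeGroup.of (1 : Fin 2))⁻¹ *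
        FreeGroup.of (0 : Fin 2) * FreeGroup.of (1 : Fin 2)) : RF 2) ≠ 1) ∧
    (⊤ : Subgroup (RF 2)).lowerCentralSeries 2 = ⊥ := by
  have hEc : (QuotientGroup.mk ((FreeGroup.of (0 : Fin 2))⁻¹ * (FreeGroup.of (1 : Fin 2))⁻¹ *
      FreeGroup.of (0 : Fin 2) * FreeGroup.of (1 : Fin 2)) : RF 2) = RFtwo.c := by
    show RFtwo.π _ = _
    simp only [map_mul, map_inv]
  rw [hEc]
  exact ⟨RFtwo.hc_center, RFtwo.hc_ne_one, RFtwo.lcs_two⟩
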